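/- Let a ∈ L¹(T) be even and let b ∈ L¹[−1,1] be given by b(cos θ) = a(e^{iθ}) √((1 + cos θ)/(1 − cos θ)) for 0 < θ < π (assume this defines an integrable function on [−1,1]). Then for every n ≥ 1: det( (a_{j−k} + a_{j+k+1})_{j,k=0}^{n−1} ) = det H_n[b]. -/

import Mathlib

open Filter MeasureTheory

noncomputable section

/-- The `k`-th Fourier coefficient of a function on the unit circle, given as a
`2π`-periodic function of the angle: `a_k = (1/(2π)) ∫_0^{2π} f(θ) e^{-ikθ} dθ`. -/
def fc (f : ℝ → ℂ) (k : ℤ) : ℂ :=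
  ((1 / (2 * Real.pi) : ℝ) : ℂ) *
    ∫ θ in (0:ℝ)..(2 * Real.pi), f θ * Complex.exp (-(Complex.I * k * θ))

/-- The `m`-th moment `b_m = (1/π) ∫_{-1}^1 b(x) (2x)^{m-1} dx` of `b ∈ L¹[-1,1]`,
here recorded via the exponent `m - 1`, i.e. `bmom b e = (1/π) ∫_{-1}^1 b(x)(2x)^e dx`. -/
def bmom (b : ℝ → ℂ) (e : ℕ) : ℂ :=
  ((1 / Real.pi : ℝ) : ℂ) * ∫ x in (-1:ℝ)..1, b x * (2 * (x : ℂ)) ^ e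

private def cheb : ℕ → ℕ → ℤ
  | 0, i => if i = 0 then 1 else 0
  | 1, i => if i = 1 then 1 else if i = 0 then -1 else 0
  | (j+2), i => (if i = 0 then 0 else cheb (j+1) (i-1)) - cheb j i

private lemma cheb_eq_zero : ∀ j i, j < i → cheb j i = 0
  | 0, i, h => by simp only [cheb]; omega
  | 1, i, h => by simp only [cheb]; omega
  | (j+2), i, h => by
      have h1 := cheb_eq_zero (j+1) (i-1) (by omega)
      have h2 := cheb_eq_zero j i (by omega)
      simp only [cheb, h1, h2, if_neg (by omega : ¬ i = 0), sub_zero]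

private lemma cheb_diag : ∀ j, cheb j j = 1
  | 0 => rfl
  | 1 => rfl
  | (j+2) => by
      have h1 := cheb_diag (j+1)
      have h2 := cheb_eq_zero j (j+2) (by omega)
      norm_num [cheb, h1, h2]

private lemma cos_add_cos (x y : ℝ) :
    Real.cos (x + y) + Real.cos (x - y) = 2 * Real.cos x * Real.cos y := by
  rw [Real.cos_add, Real.cos_sub]; ring

/-- `P j θ := ∑ cheb j i (2 cos θ)^i` satisfies `P j θ * cos (θ/2) = cos ((j+1/2) θ)`. -/
private lemma cheb_cos : ∀ (j : ℕ) (θ : ℝ),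
    (∑ i ∈ Finset.range (j+1), (cheb j i : ℝ) * (2 * Real.cos θ) ^ i) * Real.cos (θ/2)
      = Real.cos (((j : ℝ) + 1/2) * θ)
  | 0, θ => by
      rw [show ((0:ℕ) + (1:ℝ)/2) * θ = θ/2 by push_cast; ring]
      simp [cheb]
  | 1, θ => by
      have h := cos_add_cos θ (θ/2)
      rw [show θ - θ/2 = θ/2 by ring] at h
      rw [show ((1:ℕ) + (1:ℝ)/2) * θ = θ + θ/2 by push_cast; ring]
      simp only [Finset.sum_range_succ, Finset.sum_range_zero, cheb]
      push_cast
      linarith [h]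
  | (j+2), θ => by
      have ih1 := cheb_cos (j+1) θ
      have ih0 := cheb_cos j θ
      have h := cos_add_cos (((j:ℝ)+1+1/2) * θ) θ
      rw [show ((j:ℝ)+1+1/2) * θ + θ = ((j:ℝ)+2 + 1/2) * θ by ring,
          show ((j:ℝ)+1+1/2) * θ - θ = ((j:ℝ) + 1/2) * θ by ring] at h
      have hsum : (∑ i ∈ Finset.range (j+3), (cheb (j+2) i : ℝ) * (2 * Real.cos θ) ^ i)
          = 2 * Real.cos θ *
              (∑ i ∈ Finset.range (j+2), (cheb (j+1) i : ℝ) * (2 * Real.cos θ) ^ i)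
            - ∑ i ∈ Finset.range (j+1), (cheb j i : ℝ) * (2 * Real.cos θ) ^ i := by
        have e1 : ∀ i, (cheb (j+2) i : ℝ)
            = (if i = 0 then 0 else (cheb (j+1) (i-1) : ℝ)) - (cheb j i : ℝ) := by
          intro i; simp only [cheb]; split <;> push_cast <;> ring
        simp only [e1, sub_mul, Finset.sum_sub_distrib]
        congr 1
        · have := Finset.sum_range_succ' (fun i => (if i = 0 then (0:ℝ)
              else (cheb (j+1) (i-1) : ℝ)) * (2 * Real.cos θ) ^ i) (j+2)
          rw [this, Finset.mul_sum]
          have h0 : (if (0:ℕ) = 0 then (0:ℝ) else (cheb (j+1) (0-1) : ℝ))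
              * (2 * Real.cos θ) ^ (0:ℕ) = 0 := by norm_num
          rw [h0, add_zero]
          exact Finset.sum_congr rfl fun i _ => by
            rw [if_neg (Nat.succ_ne_zero i), Nat.succ_sub_one]; ring
        · rw [Finset.sum_range_succ, Finset.sum_range_succ,
              cheb_eq_zero j (j+1) (by omega), cheb_eq_zero j (j+2) (by omega)]
          push_cast; ring
      push_cast at ih1 ⊢
      rw [hsum, sub_mul, mul_assoc, ih1, ih0]
      linarith [h]



/-- integrable × bounded continuous is interval integrable on `[0, 2π]`. -/
private lemma aMulInt {a : ℝ → ℂ} (hint : IntegrableOn a (Set.Ioc 0 (2*Real.pi)))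
    {f : ℝ → ℂ} (hf : Continuous f) {C : ℝ} (hC : ∀ x, ‖f x‖ ≤ C) :
    IntervalIntegrable (fun θ => a θ * f θ) volume 0 (2*Real.pi) := by
  rw [intervalIntegrable_iff_integrableOn_Ioc_of_le (by positivity)]
  exact (Integrable.bdd_mul hint hf.aestronglyMeasurable (Filter.Eventually.of_forall hC)).congr
    (Filter.Eventually.of_forall fun x => mul_comm _ _)

private lemma flip_integral (f : ℝ → ℂ) :
    (∫ θ in (0:ℝ)..(2*Real.pi), f (2*Real.pi - θ)) = ∫ θ in (0:ℝ)..(2*Real.pi), f θ := by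
  simpa using intervalIntegral.integral_comp_sub_left f (2*Real.pi)

private lemma fc_eq_cos {a : ℝ → ℂ} (hper : Function.Periodic a (2*Real.pi))
    (hint : IntegrableOn a (Set.Ioc 0 (2*Real.pi))) (heven : ∀ θ, a (-θ) = a θ) (m : ℤ) :
    fc a m = ((1 / (2 * Real.pi) : ℝ) : ℂ) *
      ∫ θ in (0:ℝ)..(2*Real.pi), a θ * ((Real.cos (m * θ) : ℝ) : ℂ) := by
  have hflip : ∀ θ : ℝ, a (2*Real.pi - θ) = a θ := fun θ => by
    rw [show 2*Real.pi - θ = -θ + 2*Real.pi by ring, hper (-θ), heven]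
  have hnorm : ∀ (c : ℂ) (θ : ℝ), ‖Complex.exp (c * θ)‖ ≤ 1 → True := fun _ _ _ => trivial
  have hb1 : ∀ θ : ℝ, ‖Complex.exp (Complex.I * m * θ)‖ ≤ 1 := by
    intro θ
    rw [show Complex.I * m * θ = ((m*θ:ℝ):ℂ) * Complex.I by push_cast; ring]
    rw [Complex.norm_exp_ofReal_mul_I]
  have hb2 : ∀ θ : ℝ, ‖Complex.exp (-(Complex.I * m * θ))‖ ≤ 1 := by
    intro θ
    rw [show -(Complex.I * m * θ) = ((-(m*θ):ℝ):ℂ) * Complex.I by push_cast; ring]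
    rw [Complex.norm_exp_ofReal_mul_I]
  have hi1 : IntervalIntegrable (fun θ : ℝ => a θ * Complex.exp (Complex.I * m * θ))
      volume 0 (2*Real.pi) := aMulInt hint (by continuity) hb1
  have hi2 : IntervalIntegrable (fun θ : ℝ => a θ * Complex.exp (-(Complex.I * m * θ)))
      volume 0 (2*Real.pi) := aMulInt hint (by continuity) hb2
  have hE : ∀ θ : ℝ, Complex.exp (-(Complex.I * m * ((2*Real.pi - θ : ℝ) : ℂ)))
      = Complex.exp (Complex.I * m * θ) := by
    intro θ
    rw [show -(Complex.I * m * ((2*Real.pi - θ : ℝ):ℂ))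
        = Complex.I * m * θ + (-m : ℤ) * (2 * Real.pi * Complex.I) by push_cast; ring,
      Complex.exp_add, Complex.exp_int_mul_two_pi_mul_I, mul_one]
  have h1 : (∫ θ in (0:ℝ)..(2*Real.pi), a θ * Complex.exp (Complex.I * m * θ))
      = ∫ θ in (0:ℝ)..(2*Real.pi), a θ * Complex.exp (-(Complex.I * m * θ)) := by
    rw [← flip_integral (fun θ => a θ * Complex.exp (-(Complex.I * m * θ)))]
    refine intervalIntegral.integral_congr fun θ _ => ?_
    rw [hflip θ, hE θ]
  have hcos : ∀ θ : ℝ, a θ * ((Real.cos (m * θ) : ℝ) : ℂ)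
      = (a θ * Complex.exp (Complex.I*m*θ) + a θ * Complex.exp (-(Complex.I*m*θ)))/2 := by
    intro θ
    have h2 : Complex.exp (Complex.I*m*θ) + Complex.exp (-(Complex.I*m*θ))
        = 2 * Complex.cos ((m:ℂ)*θ) := by
      rw [show Complex.I*(m:ℂ)*(θ:ℂ) = ((m:ℂ)*θ)*Complex.I by ring]
      rw [show -(((m:ℂ)*θ)*Complex.I) = (-((m:ℂ)*θ))*Complex.I by ring]
      rw [Complex.exp_mul_I, Complex.exp_mul_I, Complex.cos_neg, Complex.sin_neg]
      ring
    have h3 : ((Real.cos ((m:ℝ) * θ) : ℝ) : ℂ) = Complex.cos ((m:ℂ)*θ) := by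
      rw [Complex.ofReal_cos]; push_cast; ring_nf
    rw [h3, ← mul_add, h2]
    ring
  rw [intervalIntegral.integral_congr (fun θ _ => hcos θ)]
  rw [intervalIntegral.integral_div, intervalIntegral.integral_add hi1 hi2, h1]
  rw [fc]
  congr 1
  ring

private lemma hbound (q : ℕ) (x : ℝ) : |(1 + Real.cos x) * (2*Real.cos x)^q| ≤ 2 * 2^q := by
  rw [abs_mul, abs_pow]
  have c1 := Real.neg_one_le_cos x
  have c2 := Real.cos_le_one x
  have h1 : |1 + Real.cos x| ≤ 2 := by rw [abs_le]; constructor <;> linarith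
  have h2 : |2*Real.cos x| ≤ 2 := by rw [abs_le]; constructor <;> linarith
  exact mul_le_mul h1 (pow_le_pow_left₀ (abs_nonneg _) h2 q) (by positivity) (by norm_num)

private lemma aTrigInt {a : ℝ → ℂ} (hint : IntegrableOn a (Set.Ioc 0 (2*Real.pi))) (q : ℕ) :
    IntervalIntegrable (fun θ => a θ * (((1+Real.cos θ)*(2*Real.cos θ)^q : ℝ):ℂ))
      volume 0 (2*Real.pi) :=
  aMulInt hint (by continuity) (fun x => by
    rw [Complex.norm_real, Real.norm_eq_abs]; exact hbound q x)

private lemma cos_image : Real.cos '' Set.Ioo 0 Real.pi = Set.Ioo (-1) 1 := by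
  apply Set.eq_of_subset_of_subset
  · rintro x ⟨θ, ⟨h1, h2⟩, rfl⟩
    constructor
    · have := Real.strictAntiOn_cos ⟨h1.le, h2.le⟩
        (Set.right_mem_Icc.mpr Real.pi_pos.le) h2
      simpa [Real.cos_pi] using this
    · have := Real.strictAntiOn_cos (Set.left_mem_Icc.mpr Real.pi_pos.le) ⟨h1.le, h2.le⟩ h1
      simpa [Real.cos_zero] using this
  · rintro y ⟨hy1, hy2⟩
    refine ⟨Real.arccos y, ⟨Real.arccos_pos.mpr hy2, ?_⟩, Real.cos_arccos hy1.le hy2.le⟩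
    exact lt_of_le_of_ne (Real.arccos_le_pi y) fun h => by
      have := Real.arccos_eq_pi.mp h; linarith

private lemma moment_eq {a b : ℝ → ℂ} (hper : Function.Periodic a (2*Real.pi))
    (hint : IntegrableOn a (Set.Ioc 0 (2*Real.pi))) (heven : ∀ θ : ℝ, a (-θ) = a θ)
    (hb : ∀ θ : ℝ, 0 < θ → θ < Real.pi →
      b (Real.cos θ) =
        a θ * ((Real.sqrt ((1 + Real.cos θ) / (1 - Real.cos θ)) : ℝ) : ℂ)) (m : ℕ) :
    ((1 / (2*Real.pi) : ℝ):ℂ) * (∫ θ in (0:ℝ)..(2*Real.pi),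
        a θ * (((1 + Real.cos θ) * (2*Real.cos θ)^m : ℝ) : ℂ))
      = bmom b m := by
  set g : ℝ → ℂ := fun θ => a θ * (((1 + Real.cos θ) * (2*Real.cos θ)^m : ℝ) : ℂ) with hg
  have hInt : IntervalIntegrable g volume 0 (2*Real.pi) := aTrigInt hint m
  have hpi := Real.pi_pos
  -- flip symmetry of g
  have hflip : ∀ θ : ℝ, g (2*Real.pi - θ) = g θ := by
    intro θ
    have ha : a (2*Real.pi - θ) = a θ := by
      rw [show 2*Real.pi - θ = -θ + 2*Real.pi by ring, hper (-θ), heven]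
    simp only [hg, ha, Real.cos_two_pi_sub]
  -- second half equals first half
  have h2 : (∫ θ in Real.pi..(2*Real.pi), g θ) = ∫ θ in (0:ℝ)..Real.pi, g θ := by
    have := intervalIntegral.integral_comp_sub_left (a := (0:ℝ)) (b := Real.pi) g (2*Real.pi)
    rw [intervalIntegral.integral_congr (g := g) (fun θ _ => hflip θ),
      show 2*Real.pi - Real.pi = Real.pi by ring, show 2*Real.pi - 0 = 2*Real.pi by ring] at this
    exact this.symm
  have hsplit : (∫ θ in (0:ℝ)..(2*Real.pi), g θ)
      = 2 * ∫ θ in (0:ℝ)..Real.pi, g θ := by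
    have hA : IntervalIntegrable g volume 0 Real.pi := by
      refine hInt.mono_set ?_
      rw [Set.uIcc_of_le hpi.le, Set.uIcc_of_le (by linarith)]
      exact Set.Icc_subset_Icc le_rfl (by linarith)
    have hB : IntervalIntegrable g volume Real.pi (2*Real.pi) := by
      refine hInt.mono_set ?_
      rw [Set.uIcc_of_le (by linarith), Set.uIcc_of_le (by linarith)]
      exact Set.Icc_subset_Icc hpi.le le_rfl
    rw [← intervalIntegral.integral_add_adjacent_intervals hA hB, h2]
    ring
  -- change of variables on the b side
  have hjac := integral_image_eq_integral_abs_deriv_smul measurableSet_Ioo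
      (fun x _ => (Real.hasDerivAt_cos x).hasDerivWithinAt)
      (Real.injOn_cos.mono Set.Ioo_subset_Icc_self)
      (fun x => b x * (2 * (x:ℂ)) ^ m)
  rw [cos_image] at hjac
  have hcongr : (∫ x in Set.Ioo 0 Real.pi,
        |(-Real.sin x)| • (b (Real.cos x) * (2 * ((Real.cos x : ℝ):ℂ)) ^ m))
      = ∫ x in Set.Ioo 0 Real.pi, g x := by
    refine setIntegral_congr_fun measurableSet_Ioo fun θ hθ => ?_
    obtain ⟨hθ1, hθ2⟩ := hθ
    have hc1 : Real.cos θ < 1 := by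
      have := Real.strictAntiOn_cos (Set.left_mem_Icc.mpr hpi.le) ⟨hθ1.le, hθ2.le⟩ hθ1
      simpa [Real.cos_zero] using this
    have hc2 : (0:ℝ) ≤ 1 + Real.cos θ := by nlinarith [Real.neg_one_le_cos θ]
    have hc3 : (0:ℝ) < 1 - Real.cos θ := by linarith
    have habs : |(-Real.sin θ)| = Real.sin θ := by
      rw [abs_neg, abs_of_nonneg (Real.sin_nonneg_of_nonneg_of_le_pi hθ1.le hθ2.le)]
    have key : Real.sin θ * Real.sqrt ((1+Real.cos θ)/(1-Real.cos θ)) = 1 + Real.cos θ := by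
      rw [Real.sin_eq_sqrt_one_sub_cos_sq hθ1.le hθ2.le,
        show 1 - Real.cos θ^2 = (1-Real.cos θ)*(1+Real.cos θ) by ring,
        Real.sqrt_mul hc3.le, Real.sqrt_div hc2]
      have h₁ : Real.sqrt (1-Real.cos θ) ≠ 0 := ne_of_gt (Real.sqrt_pos.mpr hc3)
      have h₂ : Real.sqrt (1-Real.cos θ) * Real.sqrt (1+Real.cos θ) *
          (Real.sqrt (1+Real.cos θ) / Real.sqrt (1-Real.cos θ))
          = Real.sqrt (1+Real.cos θ) * Real.sqrt (1+Real.cos θ) := by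
        field_simp
      rw [h₂, Real.mul_self_sqrt hc2]
    have hcoef : ((Real.sin θ : ℝ):ℂ) *
        ((Real.sqrt ((1+Real.cos θ)/(1-Real.cos θ)) : ℝ):ℂ)
        = ((1 + Real.cos θ : ℝ):ℂ) := by exact_mod_cast congrArg Complex.ofReal key
    rw [habs, hb θ hθ1 hθ2, Complex.real_smul, hg]
    simp only [Complex.ofReal_add, Complex.ofReal_one, Complex.ofReal_mul,
      Complex.ofReal_pow, Complex.ofReal_ofNat] at hcoef ⊢
    linear_combination (a θ * (2*((Real.cos θ : ℝ):ℂ))^m) * hcoef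
  -- assemble
  rw [bmom, hsplit]
  rw [intervalIntegral.integral_of_le (by norm_num : (-1:ℝ) ≤ 1),
    integral_Ioc_eq_integral_Ioo, hjac, hcongr]
  rw [intervalIntegral.integral_of_le hpi.le, integral_Ioc_eq_integral_Ioo] 
  have hpne : (Real.pi : ℂ) ≠ 0 := by
    exact_mod_cast Real.pi_ne_zero
  push_cast
  field_simp

private def P (j : ℕ) (θ : ℝ) : ℝ :=
  ∑ i ∈ Finset.range (j+1), (cheb j i : ℝ) * (2*Real.cos θ)^i

private lemma P_cont (j : ℕ) : Continuous (P j) := by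
  unfold P; fun_prop

private lemma trig_entry (j k : ℕ) (θ : ℝ) :
    Real.cos ((((j:ℤ) - k : ℤ):ℝ) * θ) + Real.cos ((((j:ℤ) + k + 1 : ℤ):ℝ) * θ)
      = (1 + Real.cos θ) * P j θ * P k θ := by
  have A := cheb_cos j θ
  have B := cheb_cos k θ
  have h := cos_add_cos (((j:ℝ)+1/2)*θ) (((k:ℝ)+1/2)*θ)
  rw [show ((j:ℝ)+1/2)*θ + ((k:ℝ)+1/2)*θ = ((((j:ℤ) + k + 1 : ℤ):ℝ)) * θ by push_cast; ring,
    show ((j:ℝ)+1/2)*θ - ((k:ℝ)+1/2)*θ = ((((j:ℤ) - k : ℤ):ℝ)) * θ by push_cast; ring] at h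
  have hc : Real.cos (θ/2)^2 = 1/2 + Real.cos θ / 2 := by
    have := Real.cos_sq (θ/2); rwa [show 2*(θ/2) = θ by ring] at this
  calc Real.cos ((((j:ℤ) - k : ℤ):ℝ) * θ) + Real.cos ((((j:ℤ) + k + 1 : ℤ):ℝ) * θ)
      = 2 * Real.cos (((j:ℝ)+1/2)*θ) * Real.cos (((k:ℝ)+1/2)*θ) := by linarith
    _ = 2 * ((P j θ) * Real.cos (θ/2)) * ((P k θ) * Real.cos (θ/2)) := by
        unfold P; rw [A, B]
    _ = (2 * Real.cos (θ/2)^2) * P j θ * P k θ := by ring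
    _ = (1 + Real.cos θ) * P j θ * P k θ := by rw [hc]; ring

private lemma entry_eq {a : ℝ → ℂ} (hper : Function.Periodic a (2*Real.pi))
    (hint : IntegrableOn a (Set.Ioc 0 (2*Real.pi))) (heven : ∀ θ : ℝ, a (-θ) = a θ)
    (j k : ℕ) :
    fc a ((j:ℤ) - k) + fc a ((j:ℤ) + k + 1)
      = ((1 / (2*Real.pi) : ℝ):ℂ) * ∫ θ in (0:ℝ)..(2*Real.pi),
          a θ * (((1 + Real.cos θ) * P j θ * P k θ : ℝ) : ℂ) := by
  rw [fc_eq_cos hper hint heven, fc_eq_cos hper hint heven, ← mul_add]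
  have hP : ∀ m : ℤ, IntervalIntegrable
      (fun θ : ℝ => a θ * ((Real.cos ((m:ℝ) * θ) : ℝ):ℂ)) volume 0 (2*Real.pi) := by
    intro m
    exact aMulInt hint (by continuity) (C := 1) fun x => by
      rw [Complex.norm_real, Real.norm_eq_abs]; exact Real.abs_cos_le_one _
  rw [← intervalIntegral.integral_add (hP _) (hP _)]
  congr 1
  refine intervalIntegral.integral_congr fun θ _ => ?_
  rw [← mul_add, ← Complex.ofReal_add, trig_entry j k θ]

private lemma expand_eq {a : ℝ → ℂ} (hint : IntegrableOn a (Set.Ioc 0 (2*Real.pi)))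
    (n j k : ℕ) (hj : j < n) (hk : k < n) :
    ((1 / (2*Real.pi) : ℝ):ℂ) * (∫ θ in (0:ℝ)..(2*Real.pi),
        a θ * (((1 + Real.cos θ) * P j θ * P k θ : ℝ) : ℂ))
      = ∑ i ∈ Finset.range n, ∑ l ∈ Finset.range n, (cheb j i : ℂ) *
          (((1 / (2*Real.pi) : ℝ):ℂ) * ∫ θ in (0:ℝ)..(2*Real.pi),
            a θ * (((1 + Real.cos θ) * (2*Real.cos θ)^(i+l) : ℝ) : ℂ)) * (cheb k l : ℂ) := by
  have hPe : ∀ j', j' < n → ∀ θ : ℝ,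
      P j' θ = ∑ i ∈ Finset.range n, (cheb j' i : ℝ) * (2*Real.cos θ)^i := by
    intro j' hj' θ
    unfold P
    refine (Finset.sum_subset (f := fun i => (cheb j' i : ℝ) * (2*Real.cos θ)^i)
        (Finset.range_subset_range.mpr hj') fun i _ hi => ?_)
    rw [cheb_eq_zero j' i (by simpa using hi)]
    simp
  have hpt : ∀ θ : ℝ, a θ * (((1 + Real.cos θ) * P j θ * P k θ : ℝ) : ℂ)
      = ∑ q ∈ Finset.range n ×ˢ Finset.range n,
          (cheb j q.1 : ℂ) *
            (a θ * (((1 + Real.cos θ) * (2*Real.cos θ)^(q.1+q.2) : ℝ) : ℂ)) *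
            (cheb k q.2 : ℂ) := by
    intro θ
    have hre : (1 + Real.cos θ) * P j θ * P k θ
        = ∑ q ∈ Finset.range n ×ˢ Finset.range n,
            (cheb j q.1 : ℝ) * ((1 + Real.cos θ) * (2*Real.cos θ)^(q.1+q.2)) *
              (cheb k q.2 : ℝ) := by
      rw [hPe j hj θ, hPe k hk θ]
      simp only [Finset.sum_product, Finset.mul_sum, Finset.sum_mul]
      rw [Finset.sum_comm]
      refine Finset.sum_congr rfl fun i _ => Finset.sum_congr rfl fun l _ => ?_
      rw [pow_add]; ring
    rw [hre]
    push_cast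
    rw [Finset.mul_sum]
    refine Finset.sum_congr rfl fun q _ => ?_
    ring
  rw [intervalIntegral.integral_congr (fun θ _ => hpt θ)]
  have hII : ∀ q : ℕ × ℕ, q ∈ Finset.range n ×ˢ Finset.range n → IntervalIntegrable
      (fun θ : ℝ => (cheb j q.1 : ℂ) *
        (a θ * (((1 + Real.cos θ) * (2*Real.cos θ)^(q.1+q.2) : ℝ) : ℂ)) * (cheb k q.2 : ℂ))
      volume 0 (2*Real.pi) := fun q _ => ((aTrigInt hint (q.1+q.2)).const_mul _).mul_const _
  rw [intervalIntegral.integral_finset_sum hII]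
  rw [Finset.mul_sum, ← Finset.sum_product']
  refine Finset.sum_congr rfl fun q _ => ?_
  rw [intervalIntegral.integral_mul_const, intervalIntegral.integral_const_mul]
  ring

/-- Let `a ∈ L¹(T)` be even and `b ∈ L¹[−1,1]` be given by
`b(cos θ) = a(e^{iθ}) √((1 + cos θ)/(1 − cos θ))` for `0 < θ < π`.  Then for every `n ≥ 1`,
`det(T_n(a) + H_n(a)) = det H_n[b]`. -/
theorem stmt6 (a : ℝ → ℂ) (hper : Function.Periodic a (2 * Real.pi))
    (hint : IntegrableOn a (Set.Ioc 0 (2 * Real.pi)))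
    (heven : ∀ θ : ℝ, a (-θ) = a θ)
    (b : ℝ → ℂ) (hbint : IntegrableOn b (Set.Icc (-1 : ℝ) 1))
    (hb : ∀ θ : ℝ, 0 < θ → θ < Real.pi →
      b (Real.cos θ) =
        a θ * ((Real.sqrt ((1 + Real.cos θ) / (1 - Real.cos θ)) : ℝ) : ℂ)) :
    ∀ n : ℕ, 1 ≤ n →
      (Matrix.of fun j k : Fin n =>
          fc a ((j : ℤ) - k) + fc a ((j : ℤ) + k + 1)).det
        = (Matrix.of fun j k : Fin n => bmom b ((j : ℕ) + k)).det := by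

  intro n hn
  have hentry : ∀ j k : ℕ, j < n → k < n →
      fc a ((j:ℤ) - k) + fc a ((j:ℤ) + k + 1)
        = ∑ i ∈ Finset.range n, ∑ l ∈ Finset.range n,
            (cheb j i : ℂ) * bmom b (i + l) * (cheb k l : ℂ) := by
    intro j k hj hk
    rw [entry_eq hper hint heven j k, expand_eq hint n j k hj hk]
    refine Finset.sum_congr rfl fun i _ => Finset.sum_congr rfl fun l _ => ?_
    rw [moment_eq hper hint heven hb (i+l)]
  set L : Matrix (Fin n) (Fin n) ℂ := Matrix.of fun j i : Fin n => (cheb (j:ℕ) (i:ℕ) : ℂ)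
    with hL
  set H : Matrix (Fin n) (Fin n) ℂ := Matrix.of fun i l : Fin n => bmom b ((i:ℕ) + (l:ℕ))
    with hH
  have hA : (Matrix.of fun j k : Fin n =>
      fc a ((j : ℤ) - k) + fc a ((j : ℤ) + k + 1)) = L * H * L.transpose := by
    ext j k
    have h := hentry (j:ℕ) (k:ℕ) j.isLt k.isLt
    have e1 : (∑ i ∈ Finset.range n, ∑ l ∈ Finset.range n,
          (cheb (j:ℕ) i : ℂ) * bmom b (i + l) * (cheb (k:ℕ) l : ℂ))
        = ∑ i : Fin n, ∑ l : Fin n,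
            (cheb (j:ℕ) (i:ℕ) : ℂ) * bmom b ((i:ℕ) + (l:ℕ)) * (cheb (k:ℕ) (l:ℕ) : ℂ) := by
      rw [← Fin.sum_univ_eq_sum_range (fun i => ∑ l ∈ Finset.range n,
        (cheb (j:ℕ) i : ℂ) * bmom b (i + l) * (cheb (k:ℕ) l : ℂ)) n]
      exact Finset.sum_congr rfl fun i _ =>
        (Fin.sum_univ_eq_sum_range (fun l =>
          (cheb (j:ℕ) (i:ℕ) : ℂ) * bmom b ((i:ℕ) + l) * (cheb (k:ℕ) l : ℂ)) n).symm
    rw [Matrix.of_apply, h, e1]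
    simp only [Matrix.mul_apply, Matrix.transpose_apply, hL, hH, Matrix.of_apply,
      Finset.sum_mul]
    rw [Finset.sum_comm]
  have htri : L.transpose.BlockTriangular id := by
    intro i j hij
    rw [Matrix.transpose_apply, hL, Matrix.of_apply,
      cheb_eq_zero (j:ℕ) (i:ℕ) (by exact_mod_cast hij)]
    simp
  have hdetL : L.transpose.det = 1 := by
    rw [Matrix.det_of_upperTriangular htri]
    rw [Finset.prod_congr rfl (fun i _ => by
      rw [Matrix.transpose_apply, hL, Matrix.of_apply, cheb_diag (i:ℕ)] : 
      ∀ i ∈ Finset.univ, L.transpose i i = ((1:ℤ):ℂ))]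
    simp
  have hdetL' : L.det = 1 := by rw [← Matrix.det_transpose]; exact hdetL
  rw [hA, Matrix.det_mul, Matrix.det_mul, hdetL, hdetL', one_mul, mul_one]

end
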